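/- Let c ∈ k with |c| ≥ 4 > 1 in an algebraically closed complete non-archimedean field of residue characteristic ≠ 2, and let P_c(z) = z² + c. Then the filled Julia set K_c = {z ∈ k : (|P_c^n(z)|)_n is bounded} is non-empty, compact in k, totally invariant (P_c⁻¹(K_c) = K_c = P_c(K_c)), and P_c restricted to K_c is topologically conjugate to the left shift on {0,1}^ℕ. -/

import Mathlib

set_option linter.unusedSectionVars false
set_option linter.unusedVariables false
set_option maxHeartbeats 1000000

section Aux
variable {k : Type*} [NontriviallyNormedField k] [IsUltrametricDist k]

private lemma m18_dom_add (x y : k) (h : ‖y‖ < ‖x‖) : ‖x + y‖ = ‖x‖ := by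
  rw [IsUltrametricDist.norm_add_eq_max_of_norm_ne_norm h.ne', max_eq_left h.le]

private lemma m18_ball_norm (u x : k) (hun : 2 ≤ ‖u‖) (hx : ‖x - u‖ ≤ 1) : ‖x‖ = ‖u‖ := by
  have : x = u + (x - u) := by ring
  rw [this, m18_dom_add u (x - u) (by linarith)]

private lemma m18_fact (c u z : k) (hu : u ^ 2 = -c) : z ^ 2 + c = (z - u) * (z + u) := by
  have : c = -(u^2) := by rw [hu]; ring
  rw [this]; ring

-- one of ‖z-u‖, ‖z+u‖ is ≥ ‖u‖
private lemma m18_max_ge (u z : k) (h2 : ‖(2:k)‖ = 1) : ‖u‖ ≤ max ‖z - u‖ ‖z + u‖ := by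
  have : (2 : k) * u = (z + u) + -(z - u) := by ring
  calc ‖u‖ = ‖(2:k) * u‖ := by rw [norm_mul, h2, one_mul]
  _ = ‖(z + u) + -(z - u)‖ := by rw [this]
  _ ≤ max ‖z + u‖ ‖-(z - u)‖ := IsUltrametricDist.norm_add_le_max _ _
  _ = max ‖z - u‖ ‖z + u‖ := by rw [norm_neg, max_comm]

-- if z is in neither ball then P z is outside the closed ball of radius ‖u‖
private lemma m18_far (c u z : k) (hu : u ^ 2 = -c) (h2 : ‖(2:k)‖ = 1) (hun : 2 ≤ ‖u‖)
    (hz1 : 1 < ‖z - u‖) (hz2 : 1 < ‖z + u‖) : ‖u‖ < ‖z ^ 2 + c‖ := by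
  rw [m18_fact c u z hu, norm_mul]
  rcases max_cases ‖z - u‖ ‖z + u‖ with ⟨hmax, _⟩ | ⟨hmax, _⟩ <;>
    have := m18_max_ge u z h2 <;> rw [hmax] at this <;> nlinarith

private lemma m18_expand (c u z w : k) (hu : u ^ 2 = -c) (h2 : ‖(2:k)‖ = 1)
    (hun : 2 ≤ ‖u‖) (hz : ‖z - u‖ ≤ 1) (hw : ‖w - u‖ ≤ 1) :
    ‖(z ^ 2 + c) - (w ^ 2 + c)‖ = ‖u‖ * ‖z - w‖ := by
  have key : (z ^ 2 + c) - (w ^ 2 + c) = (2 * u + ((z - u) + (w - u))) * (z - w) := by ring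
  have hsmall : ‖(z - u) + (w - u)‖ < ‖2 * u‖ := by
    calc ‖(z - u) + (w - u)‖ ≤ max ‖z - u‖ ‖w - u‖ := IsUltrametricDist.norm_add_le_max _ _
    _ ≤ 1 := by simp [hz, hw]
    _ < ‖2 * u‖ := by rw [norm_mul, h2, one_mul]; linarith
  rw [key, norm_mul, m18_dom_add _ _ hsmall, norm_mul, h2, one_mul]

-- branch existence
private lemma m18_branch [IsAlgClosed k] (c u w : k) (hu : u ^ 2 = -c) (h2 : ‖(2:k)‖ = 1)
    (hun : 2 ≤ ‖u‖) (hw : ‖w‖ ≤ ‖u‖) : ∃ z : k, ‖z - u‖ ≤ 1 ∧ z ^ 2 + c = w := by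
  obtain ⟨z₀, hz₀⟩ := IsAlgClosed.exists_pow_nat_eq (w - c) (n := 2) two_pos
  have hfac : ∀ z : k, z ^ 2 = w - c → (z - u) * (z + u) = w := by
    intro z hz
    have : (z - u) * (z + u) = z ^ 2 - u ^ 2 := by ring
    rw [this, hz, hu]; ring
  have hprod : ‖z₀ - u‖ * ‖z₀ + u‖ = ‖w‖ := by rw [← norm_mul, hfac z₀ hz₀]
  have hu0 : (0:ℝ) < ‖u‖ := by linarith
  rcases le_max_iff.mp (m18_max_ge u z₀ h2) with h | h
  · -- ‖z₀ - u‖ ≥ ‖u‖ : take z = -z₀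
    refine ⟨-z₀, ?_, by rw [show (-z₀)^2 = z₀^2 by ring, hz₀]; ring⟩
    have h1 : ‖-z₀ - u‖ = ‖z₀ + u‖ := by rw [show -z₀ - u = -(z₀ + u) by ring, norm_neg]
    rw [h1]
    by_contra hgt
    push_neg at hgt
    nlinarith
  · refine ⟨z₀, ?_, by rw [hz₀]; ring⟩
    by_contra hgt
    push_neg at hgt
    nlinarith

end Aux

/-- Let k be an algebraically closed complete non-archimedean field of
residue characteristic ≠ 2 (i.e. ‖2‖ = 1), c ∈ k with |c| ≥ 4 (> 1), and P_c(z) = z² + c.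
Then the filled Julia set K_c = {z : (|P_cⁿ(z)|)ₙ bounded} is non-empty, compact, totally
invariant (P_c⁻¹(K_c) = K_c = P_c(K_c)), and P_c on K_c is topologically conjugate to the
left shift on {0,1}^ℕ. -/
theorem montel_stmt18 {k : Type*} [NontriviallyNormedField k] [IsAlgClosed k]
    [CompleteSpace k] [IsUltrametricDist k] (c : k) (hc : 4 ≤ ‖c‖) (h2 : ‖(2 : k)‖ = 1) :
    let P : k → k := fun z => z ^ 2 + c
    let K : Set k := {z : k | ∃ M : ℝ, ∀ n : ℕ, ‖P^[n] z‖ ≤ M}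
    K.Nonempty ∧ IsCompact K ∧ P ⁻¹' K = K ∧ P '' K = K ∧
      ∃ e : K ≃ₜ (ℕ → Bool),
        ∀ x y : K, P (x : k) = (y : k) → ∀ i : ℕ, (e y) i = (e x) (i + 1) := by
  intro P K
  obtain ⟨a, ha⟩ := IsAlgClosed.exists_pow_nat_eq (-c) (n := 2) two_pos
  have hca : ‖a‖ ^ 2 = ‖c‖ := by rw [← norm_pow, ha, norm_neg]
  have hA : 2 ≤ ‖a‖ := by nlinarith [norm_nonneg a]
  have hA0 : (0:ℝ) < ‖a‖ := by linarith
  have hA1 : (1:ℝ) < ‖a‖ := by linarith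
  set ε : Bool → k := fun b => if b then -a else a with hε
  have hεsq : ∀ b, (ε b) ^ 2 = -c := by intro b; cases b <;> simp [ε, neg_sq, ha]
  have hεn : ∀ b, ‖ε b‖ = ‖a‖ := by intro b; cases b <;> simp [ε]
  have hεn2 : ∀ b, 2 ≤ ‖ε b‖ := fun b => by rw [hεn]; exact hA
  have hP : ∀ z : k, P z = z ^ 2 + c := fun _ => rfl
  have hPcont : Continuous P := (continuous_pow 2).add continuous_const
  -- forward invariance
  have hKfwd : ∀ z, z ∈ K → P z ∈ K := by
    rintro z ⟨M, hM⟩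
    exact ⟨M, fun n => by rw [← Function.iterate_succ_apply]; exact hM (n+1)⟩
  have hpre : P ⁻¹' K = K := by
    ext z
    simp only [Set.mem_preimage]
    constructor
    · rintro ⟨M, hM⟩
      refine ⟨max M ‖z‖, fun n => ?_⟩
      cases n with
      | zero => simpa using le_max_right _ _
      | succ m => rw [Function.iterate_succ_apply]; exact le_trans (hM m) (le_max_left _ _)
    · exact hKfwd z
  -- escape
  have hesc : ∀ z : k, ‖a‖ < ‖z‖ → z ∉ K := by
    intro z hz hzK
    obtain ⟨M, hM⟩ := hzK
    have key : ∀ n, ‖a‖ < ‖P^[n] z‖ ∧ 2 ^ n * ‖z‖ ≤ ‖P^[n] z‖ := by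
      intro n
      induction n with
      | zero => exact ⟨hz, by simp⟩
      | succ m ih =>
        obtain ⟨ih1, ih2⟩ := ih
        have hw2 : ‖P (P^[m] z)‖ = ‖P^[m] z‖ ^ 2 := by
          rw [hP]
          have h1 : ‖c‖ < ‖(P^[m] z) ^ 2‖ := by rw [norm_pow]; nlinarith
          rw [m18_dom_add _ c h1, norm_pow]
        rw [Function.iterate_succ_apply', hw2]
        constructor
        · nlinarith
        · rw [pow_succ]
          nlinarith [norm_nonneg z, pow_pos (zero_lt_two (α := ℝ)) m]
    have hz0 : (0:ℝ) < ‖z‖ := by linarith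
    obtain ⟨n, hn⟩ := pow_unbounded_of_one_lt (M / ‖z‖) (one_lt_two (α := ℝ))
    rw [div_lt_iff₀ hz0] at hn
    have h1 := le_trans (key n).2 (hM n)
    linarith
  -- orbit of a K-point stays in the closed ball of radius ‖a‖
  have hKle : ∀ z ∈ K, ∀ n, ‖P^[n] z‖ ≤ ‖a‖ := by
    intro z hz n
    by_contra hgt
    push_neg at hgt
    apply hesc _ hgt
    obtain ⟨M, hM⟩ := hz
    exact ⟨M, fun m => by rw [← Function.iterate_add_apply]; exact hM (m + n)⟩
  -- each orbit point of a K-point lies in one of the two balls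
  have hKball : ∀ z ∈ K, ∀ n, ∃ b, ‖P^[n] z - ε b‖ ≤ 1 := by
    intro z hz n
    by_contra hno
    push_neg at hno
    have h1 : 1 < ‖P^[n] z - a‖ := by simpa [ε] using hno false
    have h2' : 1 < ‖P^[n] z + a‖ := by simpa [ε, sub_neg_eq_add] using hno true
    have hfar := m18_far c a (P^[n] z) ha h2 hA h1 h2'
    have hb := hKle z hz (n+1)
    rw [Function.iterate_succ_apply', hP] at hb
    linarith
  -- inverse branches
  have hbr : ∀ (b : Bool) (w : k), ∃ z : k, ‖w‖ ≤ ‖a‖ → (‖z - ε b‖ ≤ 1 ∧ z ^ 2 + c = w) := by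
    intro b w
    by_cases hw : ‖w‖ ≤ ‖a‖
    · obtain ⟨z, hz1, hz2⟩ := m18_branch c (ε b) w (hεsq b) h2 (hεn2 b) (by rwa [hεn])
      exact ⟨z, fun _ => ⟨hz1, hz2⟩⟩
    · exact ⟨0, fun h => absurd h hw⟩
  choose g hg using hbr
  -- approximation scheme
  let F : (ℕ → Bool) → ℕ → ℕ → k := fun s =>
    Nat.rec (fun _ => a) (fun _ ih i => g (s i) (ih (i+1)))
  have hF0 : ∀ s i, F s 0 i = a := fun _ _ => rfl
  have hFs : ∀ s n i, F s (n+1) i = g (s i) (F s n (i+1)) := fun _ _ _ => rfl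
  have hFle : ∀ (s : ℕ → Bool) n i, ‖F s n i‖ ≤ ‖a‖ := by
    intro s n
    induction n with
    | zero => intro i; rw [hF0]
    | succ m ih =>
      intro i
      rw [hFs]
      obtain ⟨hb1, _⟩ := hg (s i) (F s m (i+1)) (ih (i+1))
      exact le_of_eq (by rw [m18_ball_norm (ε (s i)) _ (hεn2 (s i)) hb1, hεn])
  have hFball : ∀ (s : ℕ → Bool) n i, ‖F s (n+1) i - ε (s i)‖ ≤ 1 :=
    fun s n i => (hg (s i) (F s n (i+1)) (hFle s n (i+1))).1
  have hFP : ∀ (s : ℕ → Bool) n i, P (F s (n+1) i) = F s n (i+1) :=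
    fun s n i => (hg (s i) (F s n (i+1)) (hFle s n (i+1))).2
  have hεa : ∀ b, ‖ε b - a‖ ≤ ‖a‖ := by
    intro b
    cases b
    · simp [ε, hA0.le]
    · have h1 : ε true - a = (-2) * a := by simp [ε]; ring
      rw [h1, norm_mul, norm_neg, h2, one_mul]
  have hFdiff : ∀ (s : ℕ → Bool) n i, ‖F s (n+1) i - F s n i‖ ≤ ‖a‖ * (‖a‖⁻¹) ^ n := by
    intro s n
    induction n with
    | zero =>
      intro i
      rw [hF0, hFs, hF0]
      have hb := (hg (s i) a (le_refl ‖a‖)).1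
      have hsplit : g (s i) a - a = (g (s i) a - ε (s i)) + (ε (s i) - a) := by ring
      rw [hsplit, pow_zero, mul_one]
      refine le_trans (IsUltrametricDist.norm_add_le_max _ _) (max_le ?_ (hεa (s i)))
      linarith
    | succ m ih =>
      intro i
      rw [hFs s (m+1) i, hFs s m i]
      have hx := (hg (s i) (F s (m+1) (i+1)) (hFle s (m+1) (i+1))).1
      have hy := (hg (s i) (F s m (i+1)) (hFle s m (i+1))).1
      have hexp := m18_expand c (ε (s i)) _ _ (hεsq _) h2 (hεn2 _) hx hy
      rw [(hg (s i) (F s (m+1) (i+1)) (hFle s (m+1) (i+1))).2,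
        (hg (s i) (F s m (i+1)) (hFle s m (i+1))).2, hεn] at hexp
      have hih := ih (i+1)
      rw [hexp] at hih
      have hd : ‖g (s i) (F s (m+1) (i+1)) - g (s i) (F s m (i+1))‖ ≤ (‖a‖⁻¹) ^ m :=
        by
          have := (mul_le_mul_iff_right₀ hA0).mp hih
          calc ‖g (s i) (F s (m+1) (i+1)) - g (s i) (F s m (i+1))‖ ≤ ‖a‖ * ‖a‖⁻¹ ^ m / ‖a‖ := by
                rw [le_div_iff₀ hA0, mul_comm]; exact hih
          _ = ‖a‖⁻¹ ^ m := mul_div_cancel_left₀ _ hA0.ne'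
      calc ‖g (s i) (F s (m+1) (i+1)) - g (s i) (F s m (i+1))‖ ≤ (‖a‖⁻¹) ^ m := hd
      _ = ‖a‖ * ‖a‖⁻¹ ^ (m+1) := by
          rw [pow_succ, mul_comm (‖a‖⁻¹ ^ m), ← mul_assoc, mul_inv_cancel₀ hA0.ne', one_mul]
  -- limit point
  have hcauchy : ∀ s : ℕ → Bool, ∃ x, Filter.Tendsto (fun n => F s n 0) Filter.atTop (nhds x) := by
    intro s
    apply cauchySeq_tendsto_of_complete
    apply cauchySeq_of_le_geometric (‖a‖⁻¹) ‖a‖ (by exact inv_lt_one_of_one_lt₀ hA1)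
    intro n
    rw [dist_eq_norm, norm_sub_rev]
    exact hFdiff s n 0
  choose q hq using hcauchy
  -- shift
  let S : (ℕ → Bool) → (ℕ → Bool) := fun s i => s (i+1)
  have hFshift : ∀ (s : ℕ → Bool) n i, F s n (i+1) = F (S s) n i := by
    intro s n
    induction n with
    | zero => intro i; rfl
    | succ m ih => intro i; rw [hFs, hFs, ih (i+1)]
  have hqshift : ∀ s, P (q s) = q (S s) := by
    intro s
    have h1 : Filter.Tendsto (fun n => F s (n+1) 0) Filter.atTop (nhds (q s)) :=
      (hq s).comp (Filter.tendsto_add_atTop_nat 1)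
    have h2t : Filter.Tendsto (fun n => P (F s (n+1) 0)) Filter.atTop (nhds (P (q s))) :=
      (hPcont.tendsto (q s)).comp h1
    have h3 : (fun n => P (F s (n+1) 0)) = fun n => F (S s) n 0 := by
      funext n; rw [hFP s n 0, hFshift]
    rw [h3] at h2t
    exact tendsto_nhds_unique h2t (hq (S s))
  have hqiter : ∀ (n : ℕ) (s : ℕ → Bool), P^[n] (q s) = q (fun i => s (i + n)) := by
    intro n
    induction n with
    | zero => intro s; simp only [Function.iterate_zero_apply, add_zero]
    | succ m ih =>
      intro s
      rw [Function.iterate_succ_apply, hqshift, ih]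
      congr 1
  -- itinerary
  have hqball : ∀ s : ℕ → Bool, ‖q s - ε (s 0)‖ ≤ 1 := by
    intro s
    have h1 : Filter.Tendsto (fun n => F s (n+1) 0) Filter.atTop (nhds (q s)) :=
      (hq s).comp (Filter.tendsto_add_atTop_nat 1)
    have h1' : Filter.Tendsto (fun n => ‖F s (n+1) 0 - ε (s 0)‖) Filter.atTop
        (nhds ‖q s - ε (s 0)‖) := (h1.sub tendsto_const_nhds).norm
    exact le_of_tendsto h1' (Filter.Eventually.of_forall fun n => hFball s n 0)
  have hqitin : ∀ (s : ℕ → Bool) (n : ℕ), ‖P^[n] (q s) - ε (s n)‖ ≤ 1 := by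
    intro s n
    rw [hqiter n s]
    simpa using hqball (fun i => s (i + n))
  have hqnorm : ∀ (s : ℕ → Bool) (n : ℕ), ‖P^[n] (q s)‖ = ‖a‖ := by
    intro s n
    rw [m18_ball_norm _ _ (hεn2 (s n)) (hqitin s n), hεn]
  have hqK : ∀ s, q s ∈ K := fun s => ⟨‖a‖, fun n => le_of_eq (hqnorm s n)⟩
  -- disjointness of the two balls
  have hdisj : ∀ x : k, ¬(‖x - a‖ ≤ 1 ∧ ‖x + a‖ ≤ 1) := by
    rintro x ⟨hx1, hx2⟩
    have hle : ‖(2:k) * a‖ ≤ 1 := by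
      have hh : (2:k) * a = (x + a) + -(x - a) := by ring
      rw [hh]
      refine le_trans (IsUltrametricDist.norm_add_le_max _ _) ?_
      rw [norm_neg]
      exact max_le hx2 hx1
    rw [norm_mul, h2, one_mul] at hle
    linarith
  have hdiffle : ∀ x y : k, ‖x‖ ≤ ‖a‖ → ‖y‖ ≤ ‖a‖ → ‖x - y‖ ≤ ‖a‖ := by
    intro x y hx hy
    rw [sub_eq_add_neg]
    refine le_trans (IsUltrametricDist.norm_add_le_max _ _) ?_
    rw [norm_neg]
    exact max_le hx hy
  -- uniqueness of itineraries
  have huniq : ∀ z w : k, (∀ n, ∃ b, ‖P^[n] z - ε b‖ ≤ 1 ∧ ‖P^[n] w - ε b‖ ≤ 1) → z = w := by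
    intro z w h
    have key : ∀ n, ‖P^[n] z - P^[n] w‖ = ‖a‖ ^ n * ‖z - w‖ := by
      intro n
      induction n with
      | zero => simp
      | succ m ih =>
        obtain ⟨b, hb1, hb2⟩ := h m
        rw [Function.iterate_succ_apply', Function.iterate_succ_apply', hP, hP,
          m18_expand c (ε b) _ _ (hεsq b) h2 (hεn2 b) hb1 hb2, hεn, ih, pow_succ]
        ring
    have hbound : ∀ n, ‖P^[n] z - P^[n] w‖ ≤ ‖a‖ := by
      intro n
      obtain ⟨b, hb1, hb2⟩ := h n
      exact hdiffle _ _ (le_of_eq (by rw [m18_ball_norm _ _ (hεn2 b) hb1, hεn]))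
        (le_of_eq (by rw [m18_ball_norm _ _ (hεn2 b) hb2, hεn]))
    by_contra hne
    have hzw : 0 < ‖z - w‖ := norm_pos_iff.mpr (sub_ne_zero.mpr hne)
    obtain ⟨n, hn⟩ := pow_unbounded_of_one_lt (‖a‖ / ‖z - w‖) hA1
    rw [div_lt_iff₀ hzw] at hn
    have hb := hbound n
    rw [key n] at hb
    linarith
  -- surjectivity onto K
  have hsurj : ∀ z ∈ K, ∃ s, q s = z := by
    intro z hz
    choose s hs using hKball z hz
    exact ⟨s, huniq (q s) z fun n => ⟨s n, hqitin s n, hs n⟩⟩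
  -- injectivity
  have hinj : ∀ s t : ℕ → Bool, q s = q t → s = t := by
    intro s t hqq
    funext n
    by_contra hne
    have h1 := hqitin s n
    have h2t := hqitin t n
    rw [hqq] at h1
    cases hsn : s n <;> cases htn : t n
    · exact hne (by rw [hsn, htn])
    · rw [hsn] at h1; rw [htn] at h2t
      exact hdisj (P^[n] (q t)) ⟨by simpa [ε] using h1, by simpa [ε, sub_neg_eq_add] using h2t⟩
    · rw [hsn] at h1; rw [htn] at h2t
      exact hdisj (P^[n] (q t)) ⟨by simpa [ε] using h2t, by simpa [ε, sub_neg_eq_add] using h1⟩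
    · exact hne (by rw [hsn, htn])
  -- closeness estimate
  have hclose : ∀ (s t : ℕ → Bool) (n : ℕ), (∀ i, i < n → s i = t i) →
      ‖q s - q t‖ ≤ ‖a‖ * (‖a‖⁻¹) ^ n := by
    intro s t n hst
    have key : ∀ m, (∀ i, i < m → s i = t i) →
        ‖P^[m] (q s) - P^[m] (q t)‖ = ‖a‖ ^ m * ‖q s - q t‖ := by
      intro m
      induction m with
      | zero => intro _; simp
      | succ m ih =>
        intro hst'
        have hb1 := hqitin s m
        have hb2 := hqitin t m
        rw [hst' m (Nat.lt_succ_self m)] at hb1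
        rw [Function.iterate_succ_apply', Function.iterate_succ_apply', hP, hP,
          m18_expand c (ε (t m)) _ _ (hεsq _) h2 (hεn2 _) hb1 hb2, hεn,
          ih (fun i hi => hst' i (hi.trans (Nat.lt_succ_self m))), pow_succ]
        ring
    have hbound : ‖P^[n] (q s) - P^[n] (q t)‖ ≤ ‖a‖ :=
      hdiffle _ _ (le_of_eq (hqnorm s n)) (le_of_eq (hqnorm t n))
    rw [key n hst] at hbound
    have hpow : (0:ℝ) < ‖a‖ ^ n := pow_pos hA0 n
    calc ‖q s - q t‖ ≤ ‖a‖ / ‖a‖ ^ n := by rw [le_div_iff₀ hpow, mul_comm]; exact hbound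
    _ = ‖a‖ * (‖a‖⁻¹) ^ n := by rw [inv_pow, div_eq_mul_inv]
  -- continuity of q
  have hqcont : Continuous q := by
    rw [continuous_iff_continuousAt]
    intro s
    rw [ContinuousAt, Metric.tendsto_nhds]
    intro δ hδ
    have hr1 : ‖a‖⁻¹ < 1 := by exact inv_lt_one_of_one_lt₀ hA1
    have htend : Filter.Tendsto (fun n => ‖a‖ * (‖a‖⁻¹) ^ n) Filter.atTop (nhds 0) := by
      simpa using (tendsto_pow_atTop_nhds_zero_of_lt_one (by positivity) hr1).const_mul ‖a‖
    obtain ⟨n, hn⟩ := (htend.eventually (gt_mem_nhds hδ)).exists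
    have hCopen : IsOpen {t : ℕ → Bool | ∀ i, i < n → t i = s i} := by
      have heq : {t : ℕ → Bool | ∀ i, i < n → t i = s i} =
          ⋂ i : Fin n, {t : ℕ → Bool | t i.1 = s i.1} := by
        ext t
        simp only [Set.mem_setOf_eq, Set.mem_iInter]
        exact ⟨fun h i => h i.1 i.2, fun h i hi => h ⟨i, hi⟩⟩
      rw [heq]
      refine isOpen_iInter_of_finite fun i => ?_
      show IsOpen ((fun t : ℕ → Bool => t i.1) ⁻¹' {s i.1})
      exact (isOpen_discrete _).preimage (continuous_apply i.1)
    have hmem : {t : ℕ → Bool | ∀ i, i < n → t i = s i} ∈ nhds s :=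
      hCopen.mem_nhds (fun i _ => rfl)
    refine Filter.mem_of_superset hmem fun t ht => ?_
    show dist (q t) (q s) < δ
    rw [dist_eq_norm]
    exact lt_of_le_of_lt (hclose t s n fun i hi => ht i hi) hn
  -- K is the range of q
  have hKeq : K = Set.range q := by
    ext z
    constructor
    · intro hz
      obtain ⟨s, hs⟩ := hsurj z hz
      exact ⟨s, hs⟩
    · rintro ⟨s, rfl⟩
      exact hqK s
  have hKcomp : IsCompact K := hKeq ▸ isCompact_range hqcont
  -- image
  have himg : P '' K = K := by
    apply Set.Subset.antisymm
    · rintro _ ⟨z, hz, rfl⟩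
      exact hKfwd z hz
    · intro z hz
      obtain ⟨s, hs⟩ := hsurj z hz
      let s' : ℕ → Bool := fun n => Nat.rec false (fun m _ => s m) n
      refine ⟨q s', hqK s', ?_⟩
      rw [hqshift s']
      have hSs : S s' = s := funext fun i => rfl
      rw [hSs, hs]
  -- the homeomorphism
  let f : (ℕ → Bool) → K := fun s => ⟨q s, hqK s⟩
  have hfbij : Function.Bijective f := by
    constructor
    · intro s t hst
      exact hinj s t (congrArg Subtype.val hst)
    · intro z
      obtain ⟨s, hs⟩ := hsurj z.1 z.2
      exact ⟨s, Subtype.ext hs⟩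
  let E : (ℕ → Bool) ≃ K := Equiv.ofBijective f hfbij
  have hEcont : Continuous E := Continuous.subtype_mk hqcont _
  let H : (ℕ → Bool) ≃ₜ K := hEcont.homeoOfEquivCompactToT2
  refine ⟨⟨q (fun _ => false), hqK _⟩, hKcomp, hpre, himg, H.symm, ?_⟩
  intro x y hxy i
  have hx : q (H.symm x) = (x : k) := congrArg Subtype.val (H.apply_symm_apply x)
  have hy : q (H.symm y) = (y : k) := congrArg Subtype.val (H.apply_symm_apply y)
  have hqs : q (S (H.symm x)) = q (H.symm y) := by
    rw [← hqshift, hx, hxy, ← hy]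
  have hst := hinj _ _ hqs
  rw [← hst]
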